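/- There exists a universal constant C > 0 such that for every h > 0 and every complex sequence φ = (φ_j)_{j∈ℤ} with ∑_j h|φ_j|² < ∞, one has sup_j |φ_j| ≤ C ‖φ‖₂^{1/2} ‖D₊φ‖₂^{1/2}, where ‖φ‖₂ = (∑_j h|φ_j|²)^{1/2} and ‖D₊φ‖₂ = (∑_j h|(φ_{j+1}−φ_j)/h|²)^{1/2}. -/

import Mathlib

open Filter

set_option maxHeartbeats 1000000 in

/-- Discrete Gagliardo–Nirenberg–Sobolev inequality:
`‖φ‖_∞ ≤ C ‖φ‖₂^{1/2} ‖D₊φ‖₂^{1/2}` with a universal constant `C`,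
for mesh-weighted ℓ² norms. -/
theorem discrete_GNS_sup :
    ∃ C > 0, ∀ h : ℝ, 0 < h → ∀ φ : ℤ → ℂ,
      Summable (fun j : ℤ => h * ‖φ j‖ ^ 2) →
      ∀ j : ℤ, ‖φ j‖ ≤
        C * Real.sqrt (Real.sqrt (∑' j : ℤ, h * ‖φ j‖ ^ 2)) *
          Real.sqrt (Real.sqrt (∑' j : ℤ, h * (‖φ (j + 1) - φ j‖ / h) ^ 2)) := by
  refine ⟨Real.sqrt 2, Real.sqrt_pos.mpr two_pos, ?_⟩
  intro h hh φ hsum j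
  set f : ℤ → ℝ := fun k => ‖φ k‖ with hf
  set a : ℤ → ℝ := fun k => ‖φ (k + 1) - φ k‖ with ha
  set b : ℤ → ℝ := fun k => f (k + 1) + f k with hb
  have hf0 : ∀ k, 0 ≤ f k := fun k => norm_nonneg _
  have ha0 : ∀ k, 0 ≤ a k := fun k => norm_nonneg _
  have hb0 : ∀ k, 0 ≤ b k := fun k => add_nonneg (hf0 _) (hf0 _)
  have hab : ∀ k, a k ≤ b k := fun k => norm_sub_le _ _
  -- summability of f^2
  have hSf : Summable (fun k => f k ^ 2) := by
    have := hsum.mul_left h⁻¹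
    simpa [inv_mul_cancel_left₀ hh.ne'] using this
  have hSf1 : Summable (fun k => f (k + 1) ^ 2) :=
    (Equiv.addRight (1 : ℤ)).summable_iff.mpr hSf
  have hbsq_le : ∀ k, b k ^ 2 ≤ 2 * f (k + 1) ^ 2 + 2 * f k ^ 2 := by
    intro k; simp only [hb]; nlinarith [sq_nonneg (f (k + 1) - f k)]
  have hSb : Summable (fun k => b k ^ 2) :=
    Summable.of_nonneg_of_le (fun k => sq_nonneg _) hbsq_le
      ((hSf1.mul_left 2).add (hSf.mul_left 2))
  have hSa : Summable (fun k => a k ^ 2) :=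
    Summable.of_nonneg_of_le (fun k => sq_nonneg _)
      (fun k => pow_le_pow_left₀ (ha0 k) (hab k) 2) hSb
  set g : ℤ → ℝ := fun k => a k * b k with hg
  have hg0 : ∀ k, 0 ≤ g k := fun k => mul_nonneg (ha0 k) (hb0 k)
  have hSg : Summable g := by
    refine Summable.of_nonneg_of_le hg0 (fun k => ?_) hSb
    calc g k = a k * b k := rfl
    _ ≤ b k * b k := mul_le_mul_of_nonneg_right (hab k) (hb0 k)
    _ = b k ^ 2 := (sq (b k)).symm
  set S : ℝ := ∑' k, f k ^ 2 with hS
  set D : ℝ := ∑' k, a k ^ 2 with hD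
  have hS0 : 0 ≤ S := tsum_nonneg fun k => sq_nonneg _
  have hD0 : 0 ≤ D := tsum_nonneg fun k => sq_nonneg _
  -- tsum of b^2 ≤ 4 S
  have htb : ∑' k, b k ^ 2 ≤ 4 * S := by
    have h1 : ∑' k, (2 * f (k + 1) ^ 2 + 2 * f k ^ 2) = 2 * S + 2 * S := by
      rw [Summable.tsum_add (hSf1.mul_left 2) (hSf.mul_left 2), tsum_mul_left, tsum_mul_left]
      congr 2
      exact (Equiv.addRight (1 : ℤ)).tsum_eq (fun k => f k ^ 2)
    have h2 : ∑' k, b k ^ 2 ≤ ∑' k, (2 * f (k + 1) ^ 2 + 2 * f k ^ 2) :=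
      Summable.tsum_le_tsum hbsq_le hSb ((hSf1.mul_left 2).add (hSf.mul_left 2))
    linarith
  -- Cauchy–Schwarz
  have hCS : ∑' k, g k ≤ Real.sqrt D * Real.sqrt (∑' k, b k ^ 2) := by
    refine Summable.tsum_le_of_sum_le hSg fun s => ?_
    calc ∑ k ∈ s, g k
        ≤ Real.sqrt (∑ k ∈ s, a k ^ 2) * Real.sqrt (∑ k ∈ s, b k ^ 2) :=
          Real.sum_mul_le_sqrt_mul_sqrt s a b
    _ ≤ Real.sqrt D * Real.sqrt (∑' k, b k ^ 2) := by
        gcongr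
        · exact Summable.sum_le_tsum s (fun k _ => sq_nonneg _) hSa
        · exact Summable.sum_le_tsum s (fun k _ => sq_nonneg _) hSb
  -- telescoping: f j ^ 2 ≤ ∑' g
  have hstep : ∀ m : ℤ, f (m + 1) ^ 2 - f m ^ 2 ≤ g m := by
    intro m
    have h1 : f (m + 1) - f m ≤ a m := by
      have := abs_norm_sub_norm_le (φ (m + 1)) (φ m)
      exact (abs_le.mp this).2
    have : (f (m + 1) - f m) * b m ≤ a m * b m :=
      mul_le_mul_of_nonneg_right h1 (hb0 m)
    calc f (m + 1) ^ 2 - f m ^ 2 = (f (m + 1) - f m) * b m := by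
          simp only [hb]; ring
    _ ≤ a m * b m := this
    _ = g m := rfl
  have hkey : ∀ n : ℕ, f j ^ 2 ≤ f (j - n) ^ 2 + ∑' k, g k := by
    intro n
    have htel : ∑ i ∈ Finset.range n, (f (j - n + i + 1) ^ 2 - f (j - n + i) ^ 2)
        = f j ^ 2 - f (j - n) ^ 2 := by
      have := Finset.sum_range_sub (fun i : ℕ => f (j - n + i) ^ 2) n
      simpa [add_assoc] using this
    have hsum_le : ∑ i ∈ Finset.range n, (f (j - n + i + 1) ^ 2 - f (j - n + i) ^ 2)
        ≤ ∑ i ∈ Finset.range n, g (j - n + i) :=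
      Finset.sum_le_sum fun i _ => hstep (j - n + i)
    have hle2 : ∑ i ∈ Finset.range n, g (j - n + i) ≤ ∑' k, g k := by
      have hinj : Function.Injective (fun i : ℕ => j - n + (i : ℤ)) := by
        intro x y hxy; simpa using hxy
      have h3 := Summable.sum_le_tsum
        ((Finset.range n).map ⟨fun i : ℕ => j - n + (i : ℤ), hinj⟩)
        (fun k _ => hg0 k) hSg
      rw [Finset.sum_map] at h3
      simpa using h3
    linarith [htel ▸ hsum_le]
  have htend : Tendsto (fun n : ℕ => f (j - n) ^ 2) atTop (nhds 0) := by
    have hinj : Function.Injective (fun n : ℕ => j - (n : ℤ)) := by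
      intro x y hxy; simpa using hxy
    have h1 : Tendsto (fun n : ℕ => j - (n : ℤ)) atTop cofinite := by
      rw [← Nat.cofinite_eq_atTop]
      exact hinj.tendsto_cofinite
    exact hSf.tendsto_cofinite_zero.comp h1
  have hfj2 : f j ^ 2 ≤ ∑' k, g k := by
    have h1 : Tendsto (fun n : ℕ => f (j - n) ^ 2 + ∑' k, g k) atTop
        (nhds (0 + ∑' k, g k)) := htend.add tendsto_const_nhds
    have := ge_of_tendsto' h1 hkey
    linarith
  -- combine
  have hmain : f j ^ 2 ≤ 2 * Real.sqrt D * Real.sqrt S := by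
    calc f j ^ 2 ≤ ∑' k, g k := hfj2
    _ ≤ Real.sqrt D * Real.sqrt (∑' k, b k ^ 2) := hCS
    _ ≤ Real.sqrt D * Real.sqrt (4 * S) :=
        mul_le_mul_of_nonneg_left (Real.sqrt_le_sqrt htb) (Real.sqrt_nonneg _)
    _ = 2 * Real.sqrt D * Real.sqrt S := by
        rw [Real.sqrt_mul (by norm_num : (0:ℝ) ≤ 4), show Real.sqrt 4 = 2 by
          rw [show (4:ℝ) = 2^2 by norm_num, Real.sqrt_sq (by norm_num : (0:ℝ) ≤ 2)]]
        ring
  -- rewrite the RHS tsums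
  have hT1 : ∑' k : ℤ, h * ‖φ k‖ ^ 2 = h * S := tsum_mul_left
  have hT2 : ∑' k : ℤ, h * (‖φ (k + 1) - φ k‖ / h) ^ 2 = D * h⁻¹ := by
    have hfun : (fun k : ℤ => h * (a k / h) ^ 2) = fun k : ℤ => a k ^ 2 * h⁻¹ := by
      funext k
      have hx : ∀ x : ℝ, h * (x / h) ^ 2 = x ^ 2 * h⁻¹ := fun x => by
        field_simp
      exact hx (a k)
    calc ∑' k : ℤ, h * (‖φ (k + 1) - φ k‖ / h) ^ 2
        = ∑' k : ℤ, a k ^ 2 * h⁻¹ := by rw [← hfun]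
    _ = D * h⁻¹ := tsum_mul_right
  rw [hT1, hT2]
  have e1 : Real.sqrt (h * S) * Real.sqrt (D * h⁻¹) = Real.sqrt D * Real.sqrt S := by
    rw [← Real.sqrt_mul (by positivity), show h * S * (D * h⁻¹) = D * S by
      field_simp, Real.sqrt_mul hD0]
  have e2 : Real.sqrt 2 * Real.sqrt (Real.sqrt (h * S)) * Real.sqrt (Real.sqrt (D * h⁻¹))
      = Real.sqrt (2 * Real.sqrt D * Real.sqrt S) := by
    rw [mul_assoc, ← Real.sqrt_mul (Real.sqrt_nonneg _), e1,
      ← Real.sqrt_mul (by norm_num : (0:ℝ) ≤ 2), ← mul_assoc]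
  rw [e2]
  calc ‖φ j‖ = Real.sqrt (f j ^ 2) := (Real.sqrt_sq (hf0 j)).symm
  _ ≤ Real.sqrt (2 * Real.sqrt D * Real.sqrt S) := Real.sqrt_le_sqrt hmain
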